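/- Let v : Fin m → ℝ be nonnegative weights with m ≥ 1, let ρ > 0, and let str : Fin k → Fin m → ℝ satisfy 0 ≤ str i e ≤ ρ/10 for all i, e. Define v₀ e = 1 and v_{i+1} e = v_i e · exp(str i e / ρ). If moreover for each i we have ∑_e v_i e · str i e ≤ W · ∑_e v_i e for some W ≥ 0, then for every edge e, (1/k) ∑_{i<k} str i e ≤ 2W + (ρ · log m)/k. -/

import Mathlib

open Finset

lemma exp_le_one_add_two_mul {x : ℝ} (h0 : 0 ≤ x) (h1 : x ≤ 1/2) :
    Real.exp x ≤ 1 + 2 * x := by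
  have h2 : 1 + (-x) ≤ Real.exp (-x) := by linarith [Real.add_one_le_exp (-x)]
  have hx : 0 < Real.exp x := Real.exp_pos x
  rw [Real.exp_neg] at h2
  have h4 : (1 - x) * Real.exp x ≤ 1 := by
    have := mul_le_mul_of_nonneg_right h2 hx.le
    rw [inv_mul_cancel₀ hx.ne'] at this
    linarith
  nlinarith

theorem mwu_average_stretch
    (m k : ℕ) (hm : 1 ≤ m) (hk : 1 ≤ k)
    (ρ W : ℝ) (hρ : 0 < ρ) (hW : 0 ≤ W)
    (str : Fin k → Fin m → ℝ)
    (hstr : ∀ (i : Fin k) (e : Fin m), 0 ≤ str i e ∧ str i e ≤ ρ / 10)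
    (v : ℕ → Fin m → ℝ)
    (hv0 : ∀ e, v 0 e = 1)
    (hvstep : ∀ (i : Fin k) (e : Fin m),
      v (i + 1) e = v i e * Real.exp (str i e / ρ))
    (havg : ∀ i : Fin k, ∑ e, v i e * str i e ≤ W * ∑ e, v i e) :
    ∀ e : Fin m, (1 / (k : ℝ)) * ∑ i, str i e ≤ 2 * W + ρ * Real.log m / k := by
  have hk0 : (0:ℝ) < k := by exact_mod_cast hk
  have hm0 : (0:ℝ) < m := by exact_mod_cast hm
  have hv' : ∀ n (hn : n < k) e,
      v (n + 1) e = v n e * Real.exp (str ⟨n, hn⟩ e / ρ) := fun n hn e => hvstep ⟨n, hn⟩ e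
  -- positivity
  have hpos : ∀ n, n ≤ k → ∀ e, 0 < v n e := by
    intro n
    induction n with
    | zero => intro _ e; rw [hv0]; norm_num
    | succ n ih =>
      intro hn e
      have hn' : n < k := hn
      rw [hv' n hn' e]
      exact mul_pos (ih hn'.le e) (Real.exp_pos _)
  -- sum bound
  have hS : ∀ n, n ≤ k → ∑ e, v n e ≤ m * Real.exp (2 * W * n / ρ) := by
    intro n
    induction n with
    | zero =>
      intro _
      simp [hv0]
    | succ n ih =>
      intro hn
      have hn' : n < k := hn
      have hSn : (0:ℝ) ≤ ∑ e, v n e :=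
        Finset.sum_nonneg fun e _ => (hpos n hn'.le e).le
      calc ∑ e, v (n+1) e
          = ∑ e, v n e * Real.exp (str ⟨n, hn'⟩ e / ρ) := by
            exact Finset.sum_congr rfl fun e _ => hv' n hn' e
        _ ≤ ∑ e, v n e * (1 + 2 * (str ⟨n, hn'⟩ e / ρ)) := by
            apply Finset.sum_le_sum
            intro e _
            apply mul_le_mul_of_nonneg_left _ (hpos n hn'.le e).le
            apply exp_le_one_add_two_mul
            · exact div_nonneg (hstr ⟨n, hn'⟩ e).1 hρ.le
            · rw [div_le_iff₀ hρ]
              have := (hstr ⟨n, hn'⟩ e).2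
              linarith
        _ = (∑ e, v n e) + (2/ρ) * ∑ e, v n e * str ⟨n, hn'⟩ e := by
            rw [Finset.mul_sum, ← Finset.sum_add_distrib]
            apply Finset.sum_congr rfl
            intro e _
            field_simp
        _ ≤ (∑ e, v n e) + (2/ρ) * (W * ∑ e, v n e) := by
            have h2ρ : (0:ℝ) ≤ 2/ρ := by positivity
            exact add_le_add le_rfl (mul_le_mul_of_nonneg_left (havg ⟨n, hn'⟩) h2ρ)
        _ = (∑ e, v n e) * (1 + 2 * W / ρ) := by ring
        _ ≤ (∑ e, v n e) * Real.exp (2 * W / ρ) := by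
            apply mul_le_mul_of_nonneg_left _ hSn
            have := Real.add_one_le_exp (2 * W / ρ)
            linarith
        _ ≤ (m * Real.exp (2 * W * n / ρ)) * Real.exp (2 * W / ρ) :=
            mul_le_mul_of_nonneg_right (ih hn'.le) (Real.exp_pos _).le
        _ = m * Real.exp (2 * W * ((n+1 : ℕ) : ℝ) / ρ) := by
            rw [mul_assoc, ← Real.exp_add]
            congr 1
            push_cast
            ring
  intro e
  -- log formula
  set g : ℕ → ℝ := fun i => if h : i < k then str ⟨i, h⟩ e else 0 with hg
  have hlog : ∀ n, n ≤ k → Real.log (v n e) = (∑ i ∈ Finset.range n, g i) / ρ := by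
    intro n
    induction n with
    | zero => intro _; simp [hv0]
    | succ n ih =>
      intro hn
      have hn' : n < k := hn
      rw [hv' n hn' e, Real.log_mul (hpos n hn'.le e).ne' (Real.exp_ne_zero _),
        Real.log_exp, ih hn'.le, Finset.sum_range_succ, add_div]
      congr 1
      rw [hg]
      simp [hn']
  have hsum : ∑ i, str i e = ∑ i ∈ Finset.range k, g i := by
    rw [← Fin.sum_univ_eq_sum_range]
    apply Finset.sum_congr rfl
    intro i _
    simp [hg, i.isLt]
  have hfin : (∑ i, str i e) / ρ ≤ Real.log m + 2 * W * k / ρ := by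
    rw [hsum, ← hlog k le_rfl]
    have h2 : v k e ≤ ∑ e', v k e' :=
      Finset.single_le_sum (fun e' _ => (hpos k le_rfl e').le) (Finset.mem_univ e)
    have h3 : Real.log (v k e) ≤ Real.log (m * Real.exp (2 * W * k / ρ)) := by
      apply Real.log_le_log (hpos k le_rfl e)
      exact h2.trans (hS k le_rfl)
    rwa [Real.log_mul hm0.ne' (Real.exp_ne_zero _), Real.log_exp] at h3
  have h6 := mul_le_mul_of_nonneg_right hfin hρ.le
  rw [div_mul_cancel₀ _ hρ.ne', add_mul, div_mul_cancel₀ _ hρ.ne'] at h6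
  have hgoal : (1/(k:ℝ)) * ∑ i, str i e ≤ 2 * W + ρ * Real.log m / k := by
    rw [one_div, inv_mul_le_iff₀ hk0]
    have hkk : (k:ℝ) * (2 * W + ρ * Real.log m / k) = 2 * W * k + ρ * Real.log m := by
      field_simp
    rw [hkk]
    linarith
  exact hgoal
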